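/- For all real numbers r and S with 0 < r ≤ S, the entropy integral of a VC-subgraph class satisfies ∫₀^r √(1 + log(S/ε)) dε ≤ 2·r·√(1 + log(S/r)), where log denotes the natural logarithm. -/

import Mathlib

open MeasureTheory intervalIntegral Set

/-- Auxiliary: antiderivative of `log r - log ε`. -/
noncomputable def vcAux (r : ℝ) : ℝ → ℝ := fun x => x * (Real.log r + 1) - x * Real.log x

lemma vcAux_cont (r : ℝ) : Continuous (vcAux r) :=
  (continuous_id.mul continuous_const).sub Real.continuous_mul_log

lemma vcAux_deriv (r : ℝ) {x : ℝ} (hx : x ≠ 0) :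
    HasDerivAt (vcAux r) (Real.log r - Real.log x) x := by
  have h1 : HasDerivAt (fun x : ℝ => x * (Real.log r + 1)) (Real.log r + 1) x := by
    simpa using (hasDerivAt_id x).mul_const (Real.log r + 1)
  have h2 := Real.hasDerivAt_mul_log hx
  have := h1.sub h2
  exact this.congr_deriv (by ring)

lemma vc_log_integrable {r : ℝ} (hr : 0 < r) :
    IntervalIntegrable (fun x => Real.log r - Real.log x) volume 0 r := by
  apply intervalIntegrable_deriv_of_nonneg (g := vcAux r)
  · exact (vcAux_cont r).continuousOn
  · intro x hx
    rw [min_eq_left hr.le, max_eq_right hr.le] at hx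
    exact vcAux_deriv r (ne_of_gt hx.1)
  · intro x hx
    rw [min_eq_left hr.le, max_eq_right hr.le] at hx
    exact sub_nonneg.mpr (Real.log_le_log hx.1 hx.2.le)

lemma vc_log_integral {r : ℝ} (hr : 0 < r) :
    (∫ x in (0:ℝ)..r, (Real.log r - Real.log x)) = r := by
  rw [integral_eq_sub_of_hasDeriv_right_of_le hr.le (vcAux_cont r).continuousOn
      (fun x hx => (vcAux_deriv r (ne_of_gt hx.1)).hasDerivWithinAt)
      (vc_log_integrable hr)]
  simp [vcAux]
  ring

/-- For `0 < r ≤ S`,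
`∫₀^r √(1 + log(S/ε)) dε ≤ 2 r √(1 + log(S/r))`. -/
theorem vc_entropy_integral_bound (r S : ℝ) (hr : 0 < r) (hrS : r ≤ S) :
    (∫ ε in (0:ℝ)..r, Real.sqrt (1 + Real.log (S / ε)))
      ≤ 2 * r * Real.sqrt (1 + Real.log (S / r)) := by
  have hS : 0 < S := hr.trans_le hrS
  set a : ℝ := 1 + Real.log (S / r) with ha_def
  have ha1 : 1 ≤ a := by
    have h : 0 ≤ Real.log (S / r) := Real.log_nonneg ((one_le_div hr).mpr hrS)
    rw [ha_def]; linarith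
  have ha0 : 0 < a := lt_of_lt_of_le one_pos ha1
  have hsa1 : 1 ≤ Real.sqrt a := Real.one_le_sqrt.mpr ha1
  have hsa0 : 0 < Real.sqrt a := lt_of_lt_of_le one_pos hsa1
  have hsq : Real.sqrt a * Real.sqrt a = a := Real.mul_self_sqrt ha0.le
  set f : ℝ → ℝ := fun ε => Real.sqrt (1 + Real.log (S / ε)) with hf_def
  set g : ℝ → ℝ := fun ε =>
    Real.sqrt a + (Real.log r - Real.log ε) / (2 * Real.sqrt a) with hg_def
  have hlogint := vc_log_integrable hr
  -- pointwise inequality on (0, r]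
  have hpt : ∀ x ∈ Ioc (0:ℝ) r, f x ≤ g x := by
    intro x hx
    have hx0 : 0 < x := hx.1
    set t : ℝ := 1 + Real.log (S / x) with ht_def
    have ht1 : 1 ≤ t := by
      have h : 0 ≤ Real.log (S / x) :=
        Real.log_nonneg ((one_le_div hx0).mpr (hx.2.trans hrS))
      rw [ht_def]; linarith
    have ht0 : 0 ≤ t := le_trans zero_le_one ht1
    have hamgm : Real.sqrt t * (2 * Real.sqrt a) ≤ t + a := by
      have h2 : 2 * (Real.sqrt t * Real.sqrt a) ≤ Real.sqrt t ^ 2 + Real.sqrt a ^ 2 := by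
        have := two_mul_le_add_sq (Real.sqrt t) (Real.sqrt a)
        linarith
      rw [Real.sq_sqrt ht0, Real.sq_sqrt ha0.le] at h2
      nlinarith
    have hfx : f x ≤ (t + a) / (2 * Real.sqrt a) := by
      rw [le_div_iff₀ (by positivity)]
      exact hamgm
    have hgx : (t + a) / (2 * Real.sqrt a) = g x := by
      have hta : t + a = 2 * a + (Real.log r - Real.log x) := by
        rw [ht_def, ha_def, Real.log_div hS.ne' hx0.ne', Real.log_div hS.ne' hr.ne']
        ring
      rw [hta, hg_def]
      field_simp
      nlinarith [hsq]
    rw [← hgx]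
    exact hfx
  -- integrability of f
  have hfmeas : AEStronglyMeasurable f (volume.restrict (Set.uIoc (0:ℝ) r)) := by
    apply Measurable.aestronglyMeasurable
    exact Real.continuous_sqrt.measurable.comp
      (measurable_const.add (Real.measurable_log.comp (measurable_const.div measurable_id)))
  have hBint : IntervalIntegrable
      (fun x => (1 + Real.log S - Real.log r) + (Real.log r - Real.log x)) volume 0 r :=
    (_root_.intervalIntegrable_const).add hlogint
  have hfint : IntervalIntegrable f volume 0 r := by
    apply hBint.mono_fun hfmeas
    rw [Filter.EventuallyLE, ae_restrict_iff' measurableSet_uIoc]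
    apply Filter.Eventually.of_forall
    intro x hx
    rw [uIoc_of_le hr.le] at hx
    have hx0 : 0 < x := hx.1
    have ht1 : 1 ≤ 1 + Real.log (S / x) := by
      have : 0 ≤ Real.log (S / x) :=
        Real.log_nonneg ((one_le_div hx0).mpr (hx.2.trans hrS))
      linarith
    have hu : 1 ≤ Real.sqrt (1 + Real.log (S / x)) := Real.one_le_sqrt.mpr ht1
    have hsq' : Real.sqrt (1 + Real.log (S / x)) * Real.sqrt (1 + Real.log (S / x))
        = 1 + Real.log (S / x) := Real.mul_self_sqrt (by linarith)
    have h1 : f x ≤ 1 + Real.log (S / x) := by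
      rw [hf_def]; nlinarith
    have heq : 1 + Real.log (S / x) =
        (1 + Real.log S - Real.log r) + (Real.log r - Real.log x) := by
      rw [Real.log_div hS.ne' hx0.ne']; ring
    rw [Real.norm_eq_abs, Real.norm_eq_abs, abs_of_nonneg (Real.sqrt_nonneg _)]
    calc f x ≤ 1 + Real.log (S / x) := h1
      _ = (1 + Real.log S - Real.log r) + (Real.log r - Real.log x) := heq
      _ ≤ |(1 + Real.log S - Real.log r) + (Real.log r - Real.log x)| := le_abs_self _
  -- integrability of g
  have hgint : IntervalIntegrable g volume 0 r :=
    (_root_.intervalIntegrable_const).add (hlogint.div_const _)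
  -- compare integrals
  have hae : f ≤ᵐ[volume.restrict (Icc (0:ℝ) r)] g := by
    have hne : ∀ᵐ x ∂(volume.restrict (Icc (0:ℝ) r)), x ≠ 0 := by
      refine ae_restrict_of_ae ?_
      have : (volume : Measure ℝ) {(0:ℝ)} = 0 := Real.volume_singleton
      rw [MeasureTheory.ae_iff]
      simpa [Set.setOf_eq_eq_singleton'] using this
    have hmem : ∀ᵐ x ∂(volume.restrict (Icc (0:ℝ) r)), x ∈ Icc (0:ℝ) r :=
      ae_restrict_mem measurableSet_Icc
    filter_upwards [hne, hmem] with x hx0 hxmem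
    exact hpt x ⟨lt_of_le_of_ne hxmem.1 (Ne.symm hx0), hxmem.2⟩
  have hmono := integral_mono_ae_restrict hr.le hfint hgint hae
  -- compute ∫ g
  have hgval : (∫ x in (0:ℝ)..r, g x) = r * Real.sqrt a + r / (2 * Real.sqrt a) := by
    rw [hg_def]
    rw [integral_add intervalIntegrable_const (hlogint.div_const _)]
    rw [intervalIntegral.integral_const, intervalIntegral.integral_div, vc_log_integral hr]
    simp [smul_eq_mul]
  rw [hgval] at hmono
  refine le_trans hmono ?_
  have key : r / (2 * Real.sqrt a) ≤ r * Real.sqrt a := by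
    rw [div_le_iff₀ (by positivity)]
    nlinarith [hsq]
  nlinarith
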